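/- Let S be a continuous t-conorm on [0,1] with residuum ⊸ that is weaker than the Łukasiewicz t-conorm. Then d is a metric on [0,1]: for all x, y, z ∈ [0,1], d(x,y) = 0 if and only if x = y, d(x,y) = d(y,x), and d(x,y) ≤ d(x,z) + d(z,y). -/

import Mathlib

open unitInterval

instance : Fact ((0:ℝ) ≤ 1) := ⟨zero_le_one⟩

/-- A continuous t-conorm on the unit interval `[0,1]`: continuous (w.r.t. the
Euclidean topology), commutative, associative, nondecreasing in each argument,
with `0` as neutral element. -/
structure IsContTConorm (S : I → I → I) : Prop where
  continuous : Continuous fun p : I × I => S p.1 p.2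
  comm : ∀ x y, S x y = S y x
  assoc : ∀ x y z, S (S x y) z = S x (S y z)
  mono : ∀ x₁ x₂ y₁ y₂, x₁ ≤ x₂ → y₁ ≤ y₂ → S x₁ y₁ ≤ S x₂ y₂
  zero_left : ∀ x, S 0 x = x

/-- The residuum of a t-conorm: `x ⊸ y = inf {z ∈ [0,1] : S(z,x) ≥ y}`. -/
noncomputable def resid (S : I → I → I) (x y : I) : I :=
  sInf {z : I | y ≤ S z x}
/-- The distance induced by the residuum: `d(x,y) = max(x ⊸ y, y ⊸ x)`. -/
noncomputable def rdist (S : I → I → I) (x y : I) : I :=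
  max (resid S x y) (resid S y x)

/-- `S` is weaker than the Łukasiewicz t-conorm `S_L(x,y) = min(x+y,1)`. -/
def WeakerThanLukasiewicz (S : I → I → I) : Prop :=
  ∀ x y : I, (S x y : ℝ) ≤ min ((x : ℝ) + (y : ℝ)) 1

private lemma resid_spec (S : I → I → I) (hS : IsContTConorm S) (x y : I) :
    y ≤ S (resid S x y) x := by
  have hc : Continuous fun z : I => S z x :=
    hS.continuous.comp (continuous_id.prodMk continuous_const)
  have hclosed : IsClosed {z : I | y ≤ S z x} := isClosed_le continuous_const hc
  have hne : ({z : I | y ≤ S z x}).Nonempty := by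
    refine ⟨1, ?_⟩
    have h1 : (1 : I) ≤ S 1 x := by
      calc (1 : I) = S 0 1 := (hS.zero_left 1).symm
        _ = S 1 0 := hS.comm 0 1
        _ ≤ S 1 x := hS.mono 1 1 0 x le_rfl (unitInterval.nonneg')
    exact le_trans (unitInterval.le_one') (le_trans h1 le_rfl)
  have := (hclosed.isCompact.sInf_mem hne)
  exact this

private lemma resid_le (S : I → I → I) {x y z : I} (h : y ≤ S z x) :
    resid S x y ≤ z := sInf_le h

private lemma resid_self (S : I → I → I) (hS : IsContTConorm S) (x : I) :
    resid S x x = 0 := by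
  refine le_antisymm (resid_le S ?_) (unitInterval.nonneg')
  rw [hS.zero_left]

/-- For a continuous t-conorm weaker than Łukasiewicz, `d(x,y) = max(x ⊸ y, y ⊸ x)`
is a metric on `[0,1]`. -/
theorem rdist_is_metric (S : I → I → I) (hS : IsContTConorm S)
    (hweak : WeakerThanLukasiewicz S) :
    ∀ x y z : I,
      (rdist S x y = 0 ↔ x = y) ∧
      rdist S x y = rdist S y x ∧
      (rdist S x y : ℝ) ≤ (rdist S x z : ℝ) + (rdist S z y : ℝ) := by
  have tri : ∀ x y z : I, (resid S x y : ℝ) ≤ (resid S x z : ℝ) + (resid S z y : ℝ) := by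
    intro x y z
    set a := resid S z y
    set b := resid S x z
    have ha : y ≤ S a z := resid_spec S hS z y
    have hb : z ≤ S b x := resid_spec S hS x z
    have hy : y ≤ S (S a b) x := by
      calc y ≤ S a z := ha
        _ ≤ S a (S b x) := hS.mono a a z (S b x) le_rfl hb
        _ = S (S a b) x := (hS.assoc a b x).symm
    have h1 : resid S x y ≤ S a b := resid_le S hy
    have h2 : (S a b : ℝ) ≤ (a : ℝ) + (b : ℝ) :=
      le_trans (hweak a b) (min_le_left _ _)
    calc (resid S x y : ℝ) ≤ (S a b : ℝ) := h1
      _ ≤ (a : ℝ) + (b : ℝ) := h2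
      _ = (b : ℝ) + (a : ℝ) := add_comm _ _
  intro x y z
  refine ⟨⟨?_, ?_⟩, ?_, ?_⟩
  · intro h
    have h1 : resid S x y = 0 := le_antisymm (le_trans (le_max_left _ _) h.le) unitInterval.nonneg'
    have h2 : resid S y x = 0 := le_antisymm (le_trans (le_max_right _ _) h.le) unitInterval.nonneg'
    have hyx : y ≤ x := by
      have := resid_spec S hS x y
      rwa [h1, hS.zero_left] at this
    have hxy : x ≤ y := by
      have := resid_spec S hS y x
      rwa [h2, hS.zero_left] at this
    exact le_antisymm hxy hyx
  · rintro rfl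
    simp [rdist, resid_self S hS]
  · simp [rdist, max_comm]
  · have e1 : (resid S x y : ℝ) ≤ (rdist S x z : ℝ) + (rdist S z y : ℝ) := by
      refine le_trans (tri x y z) (add_le_add ?_ ?_)
      · exact (Subtype.coe_le_coe.mpr (le_max_left _ _))
      · exact (Subtype.coe_le_coe.mpr (le_max_left _ _))
    have e2 : (resid S y x : ℝ) ≤ (rdist S x z : ℝ) + (rdist S z y : ℝ) := by
      have := tri y x z
      refine le_trans this ?_
      rw [add_comm]
      refine add_le_add ?_ ?_
      · exact (Subtype.coe_le_coe.mpr (le_max_right _ _))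
      · exact (Subtype.coe_le_coe.mpr (le_max_right _ _))
    have : (rdist S x y : ℝ) = max (resid S x y : ℝ) (resid S y x : ℝ) := by
      simp [rdist]
    rw [this]
    exact max_le e1 e2
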